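/- arXiv:2102.00505 — 5 statements merged into one kernel-verified Lean document; each statement's English description precedes it below -/
import Mathlib

section
/- Let n ≥ 6 be even, p an odd prime, and k ≥ 2 an integer. Suppose φ(p^k) < ⌈log₂ n⌉, p^k divides n, and 2 is a primitive root modulo p^k. Then the set D = {l·p^k : 0 ≤ l ≤ n/p^k − 1} ∪ {l·p^k − 1 : 1 ≤ l ≤ n/p^k} is a dominating set of the Knödel graph KG_n, and hence γ(KG_n) ≤ 2n/p^k. -/
/-- The Knödel graph on `n` vertices (for even `n ≥ 6`): `x ~ y` iff
`x + y ≡ 2^t - 1 (mod n)` for some `1 ≤ t ≤ ⌊log₂ n⌋`. -/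
def knodel (n : ℕ) : SimpleGraph (ZMod n) where
  Adj x y := x ≠ y ∧ ∃ t : ℕ, 1 ≤ t ∧ t ≤ Nat.log 2 n ∧ x + y = 2 ^ t - 1
  symm := by
    constructor
    rintro x y ⟨hxy, t, h1, h2, h3⟩
    exact ⟨hxy.symm, t, h1, h2, by rw [add_comm]; exact h3⟩
  loopless := ⟨fun x h => h.1 rfl⟩

/-- The domination number of a finite graph. -/
noncomputable def dominationNumber {V : Type*} [Fintype V] (G : SimpleGraph V) : ℕ :=
  sInf {k | ∃ D : Finset V, (∀ v, v ∉ D → ∃ u ∈ D, G.Adj u v) ∧ D.card = k}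

lemma mem0 {n q : ℕ} [NeZero n] (hq : q ∣ n) (hqpos : 0 < q) {y : ZMod n} (h : q ∣ y.val) :
    ∃ l : ℕ, l ≤ n / q - 1 ∧ y = ((l * q : ℕ) : ZMod n) := by
  obtain ⟨l, hl⟩ := h
  refine ⟨l, ?_, ?_⟩
  · have hyn : y.val < n := ZMod.val_lt y
    have hn : q * (n / q) = n := Nat.mul_div_cancel' hq
    have : q * l < q * (n / q) := by omega
    have := Nat.lt_of_mul_lt_mul_left this
    omega
  · rw [mul_comm, ← hl, ZMod.natCast_val, ZMod.cast_id]

lemma mem1 {n q : ℕ} [NeZero n] (hq : q ∣ n) (hqpos : 0 < q) (hnq : 1 ≤ n / q) {y : ZMod n}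
    (h : q ∣ (y + 1).val) :
    ∃ l : ℕ, 1 ≤ l ∧ l ≤ n / q ∧ y = ((l * q : ℕ) : ZMod n) - 1 := by
  obtain ⟨l, hl1, hl2⟩ := mem0 hq hqpos h
  rcases Nat.eq_zero_or_pos l with h0 | h0
  · subst h0
    refine ⟨n / q, hnq, le_refl _, ?_⟩
    have h1 : ((n / q * q : ℕ) : ZMod n) = 0 := by
      rw [Nat.div_mul_cancel hq, ZMod.natCast_self]
    have h2 : y = -1 := by
      have : y + 1 = 0 := by rw [hl2]; simp
      linear_combination this
    rw [h1, h2]; ring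
  · exact ⟨l, h0, by omega, eq_sub_of_add_eq hl2⟩

lemma unit_iff {p k : ℕ} (hp : p.Prime) (hk : 1 ≤ k) (a : ZMod (p ^ k)) :
    IsUnit a ↔ ¬ p ∣ a.val := by
  haveI : NeZero (p ^ k) := ⟨pow_ne_zero k hp.pos.ne'⟩
  have ha : ((a.val : ℕ) : ZMod (p ^ k)) = a := by rw [ZMod.natCast_val, ZMod.cast_id]
  rw [← ha, ZMod.isUnit_iff_coprime, Nat.coprime_pow_right_iff hk,
    Nat.coprime_comm, hp.coprime_iff_not_dvd]
  rw [ha]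

lemma gen_lemma {q : ℕ} [NeZero q] (h2 : IsUnit (2 : ZMod q))
    (hprim : orderOf (2 : ZMod q) = Nat.totient q) (v : ZMod q) (hv : IsUnit v) :
    ∃ t : ℕ, 1 ≤ t ∧ t ≤ Nat.totient q ∧ (2 : ZMod q) ^ t = v := by
  obtain ⟨u, hu⟩ := h2
  obtain ⟨w, hw⟩ := hv
  have hφ : 0 < Nat.totient q := Nat.totient_pos.mpr (Nat.pos_of_ne_zero (NeZero.ne q))
  have hordu : orderOf u = Nat.totient q := by
    rw [← orderOf_units, hu, hprim]
  have htop : Subgroup.zpowers u = ⊤ := by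
    apply Subgroup.eq_top_of_card_eq
    rw [Nat.card_zpowers, hordu, Nat.card_eq_fintype_card, ZMod.card_units_eq_totient]
  have hwmem : w ∈ Submonoid.powers u := by
    rw [mem_powers_iff_mem_zpowers, htop]; exact Subgroup.mem_top w
  obtain ⟨m, hm⟩ := hwmem
  have hm' : u ^ m = w := hm
  rcases Nat.eq_zero_or_pos (m % orderOf u) with h0 | h0
  · refine ⟨Nat.totient q, hφ, le_refl _, ?_⟩
    have h1 : u ^ m = 1 := by
      rw [← pow_mod_orderOf, h0, pow_zero]
    have h2' : u ^ Nat.totient q = 1 := by rw [← hordu, pow_orderOf_eq_one]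
    calc (2 : ZMod q) ^ Nat.totient q = ↑(u ^ Nat.totient q) := by rw [← hu]; push_cast; rfl
      _ = ↑(u ^ m) := by rw [h1, h2']
      _ = v := by rw [hm', hw]
  · refine ⟨m % orderOf u, h0, by rw [hordu] at *; exact (Nat.mod_lt _ (by omega)).le, ?_⟩
    calc (2 : ZMod q) ^ (m % orderOf u) = ↑(u ^ (m % orderOf u)) := by rw [← hu]; push_cast; rfl
      _ = ↑(u ^ m) := by rw [pow_mod_orderOf]
      _ = v := by rw [hm', hw]

theorem stmt_1 (n p k : ℕ) [NeZero n] (hn6 : 6 ≤ n) (hne : Even n) (hp : p.Prime) (hpodd : Odd p)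
    (hk : 2 ≤ k) (hphi : Nat.totient (p ^ k) < Nat.clog 2 n) (hpdvd : p ^ k ∣ n)
    (hprim : orderOf (2 : ZMod (p ^ k)) = Nat.totient (p ^ k)) :
    (∀ x : ZMod n,
        x ∉ ({x : ZMod n | ∃ l : ℕ, l ≤ n / p ^ k - 1 ∧ x = ((l * p ^ k : ℕ) : ZMod n)} ∪
             {x : ZMod n | ∃ l : ℕ, 1 ≤ l ∧ l ≤ n / p ^ k ∧
                x = ((l * p ^ k : ℕ) : ZMod n) - 1}) →
        ∃ y ∈ ({x : ZMod n | ∃ l : ℕ, l ≤ n / p ^ k - 1 ∧ x = ((l * p ^ k : ℕ) : ZMod n)} ∪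
             {x : ZMod n | ∃ l : ℕ, 1 ≤ l ∧ l ≤ n / p ^ k ∧
                x = ((l * p ^ k : ℕ) : ZMod n) - 1}), (knodel n).Adj y x) ∧
    dominationNumber (knodel n) ≤ 2 * n / p ^ k := by
  classical
  haveI : NeZero (p ^ k) := ⟨pow_ne_zero k hp.pos.ne'⟩
  set q := p ^ k with hqdef
  set S : Set (ZMod n) :=
    ({x : ZMod n | ∃ l : ℕ, l ≤ n / q - 1 ∧ x = ((l * q : ℕ) : ZMod n)} ∪
     {x : ZMod n | ∃ l : ℕ, 1 ≤ l ∧ l ≤ n / q ∧ x = ((l * q : ℕ) : ZMod n) - 1}) with hSdef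
  have hqpos : 0 < q := pow_pos hp.pos k
  have hnpos : 0 < n := by omega
  haveI : Fact (1 < q) := ⟨Nat.one_lt_pow (by omega) hp.one_lt⟩
  have hnq : 1 ≤ n / q := (Nat.one_le_div_iff hqpos).mpr (Nat.le_of_dvd hnpos hpdvd)
  have hφlog : Nat.totient q ≤ Nat.log 2 n := by
    have h1 : Nat.clog 2 n ≤ Nat.log 2 n + 1 :=
      (Nat.clog_le_iff_le_pow one_lt_two).mpr (Nat.lt_pow_succ_log_self one_lt_two n).le
    omega
  set f : ZMod n →+* ZMod q := ZMod.castHom hpdvd (ZMod q) with hfdef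
  have hf : ∀ y : ZMod n, f y = ((y.val : ℕ) : ZMod q) := by
    intro y
    have h1 : ((y.val : ℕ) : ZMod n) = y := by rw [ZMod.natCast_val, ZMod.cast_id]
    conv_lhs => rw [← h1]
    rw [map_natCast]
  have hzero : ∀ y : ZMod n, f y = 0 → y ∈ S := by
    intro y h
    rw [hf, ZMod.natCast_eq_zero_iff] at h
    exact Or.inl (mem0 hpdvd hqpos h)
  have hneg : ∀ y : ZMod n, f y = -1 → y ∈ S := by
    intro y h
    have h' : f (y + 1) = 0 := by rw [map_add, map_one, h]; ring
    rw [hf, ZMod.natCast_eq_zero_iff] at h'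
    exact Or.inr (mem1 hpdvd hqpos hnq h')
  have h2unit : IsUnit (2 : ZMod q) := by
    have : ((2 : ℕ) : ZMod q) = (2 : ZMod q) := by push_cast; ring
    rw [← this, ZMod.isUnit_iff_coprime, hqdef, Nat.coprime_pow_right_iff (by omega)]
    rw [Nat.coprime_comm, hp.coprime_iff_not_dvd]
    intro hdvd
    have := (Nat.prime_dvd_prime_iff_eq hp Nat.prime_two).mp hdvd
    rw [this] at hpodd
    exact (Nat.not_odd_iff_even.mpr even_two) hpodd
  have hdom : ∀ x : ZMod n, x ∉ S → ∃ y ∈ S, (knodel n).Adj y x := by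
    intro x hx
    have hx0 : f x ≠ 0 := fun h => hx (hzero x h)
    have hx1 : f x ≠ -1 := fun h => hx (hneg x h)
    by_cases hu : IsUnit (f x + 1)
    · obtain ⟨t, ht1, ht2, ht3⟩ := gen_lemma h2unit hprim _ hu
      set y : ZMod n := 2 ^ t - 1 - x with hy
      have hfy : f y = 0 := by
        rw [hy, map_sub, map_sub, map_pow, map_one, map_ofNat, ht3]; ring
      refine ⟨y, hzero y hfy, show y ≠ x ∧ _ from ⟨?_, t, ht1, le_trans ht2 hφlog, by rw [hy]; ring⟩⟩
      intro heq
      exact hx0 (heq ▸ hfy)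
    · have hux : IsUnit (f x) := by
        rw [unit_iff hp (by omega)] at hu ⊢
        push_neg at hu
        intro hdx
        have hval : (f x + 1).val = ((f x).val + 1) % q := by
          rw [ZMod.val_add, ZMod.val_one]
        rw [hval, Nat.dvd_mod_iff (dvd_pow_self p (by omega))] at hu
        have : p ∣ 1 := (Nat.dvd_add_right hdx).mp hu
        exact Nat.Prime.one_lt hp |>.ne' (Nat.dvd_one.mp this)
      obtain ⟨t, ht1, ht2, ht3⟩ := gen_lemma h2unit hprim _ hux
      set y : ZMod n := 2 ^ t - 1 - x with hy
      have hfy : f y = -1 := by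
        rw [hy, map_sub, map_sub, map_pow, map_one, map_ofNat, ht3]; ring
      refine ⟨y, hneg y hfy, show y ≠ x ∧ _ from ⟨?_, t, ht1, le_trans ht2 hφlog, by rw [hy]; ring⟩⟩
      intro heq
      exact hx1 (heq ▸ hfy)
  refine ⟨hdom, ?_⟩
  set Dfin : Finset (ZMod n) :=
    ((Finset.range (n / q)).image (fun l => ((l * q : ℕ) : ZMod n))) ∪
    ((Finset.range (n / q)).image (fun l => (((l + 1) * q : ℕ) : ZMod n) - 1)) with hD
  have hmem : ∀ x : ZMod n, x ∈ Dfin ↔ x ∈ S := by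
    intro x
    rw [hD, Finset.mem_union, Finset.mem_image, Finset.mem_image]
    simp only [Finset.mem_range]
    constructor
    · rintro (⟨l, hl, rfl⟩ | ⟨l, hl, rfl⟩)
      · exact Or.inl ⟨l, by omega, rfl⟩
      · exact Or.inr ⟨l + 1, by omega, by omega, rfl⟩

    · rintro (⟨l, hl, rfl⟩ | ⟨l, hl1, hl2, rfl⟩)
      · exact Or.inl ⟨l, by omega, rfl⟩
      · exact Or.inr ⟨l - 1, by omega, by rw [show l - 1 + 1 = l by omega]⟩
  have hcard : Dfin.card ≤ 2 * n / q := by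
    have h1 : Dfin.card ≤ n / q + n / q := by
      refine le_trans (Finset.card_union_le _ _) (add_le_add ?_ ?_) <;>
        exact le_trans Finset.card_image_le (by simp)
    have h2 : 2 * n / q = 2 * (n / q) := Nat.mul_div_assoc 2 hpdvd
    omega
  refine le_trans (Nat.sInf_le ⟨Dfin, ?_, rfl⟩) hcard
  intro v hv
  have hv' : v ∉ S := fun h => hv ((hmem v).mpr h)
  obtain ⟨y, hy, hadj⟩ := hdom v hv'
  exact ⟨y, (hmem y).mpr hy, hadj⟩
end

section
/- Let n ≥ 6 be even and suppose n has a prime factor p with 3 < p ≤ ⌈log₂ n⌉ such that 2 is a primitive root modulo p. Then γ(KG_n) ≤ n/p < n/4. -/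
lemma pow_surj_of_orderOf_eq_card {G : Type*} [Group G] [Fintype G] [DecidableEq G]
    (g : G) (h : orderOf g = Fintype.card G) (w : G) :
    ∃ k < Fintype.card G, g ^ k = w := by
  have hinj : Set.InjOn (g ^ ·) (Set.Iio (orderOf g)) := pow_injOn_Iio_orderOf
  have hcard : ((Finset.range (Fintype.card G)).image (g ^ ·)).card = Fintype.card G := by
    rw [Finset.card_image_of_injOn, Finset.card_range]
    intro a ha b hb hab
    exact hinj (by simpa [h] using Finset.mem_range.mp ha)
      (by simpa [h] using Finset.mem_range.mp hb) hab
  have huniv := Finset.eq_univ_of_card _ hcard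
  have hw : w ∈ (Finset.range (Fintype.card G)).image (g ^ ·) := huniv ▸ Finset.mem_univ w
  obtain ⟨k, hk, hgk⟩ := Finset.mem_image.mp hw
  exact ⟨k, Finset.mem_range.mp hk, hgk⟩



theorem stmt_2 (n p : ℕ) [NeZero n] (hn6 : 6 ≤ n) (hne : Even n) (hp : p.Prime)
    (hp3 : 3 < p) (hple : p ≤ Nat.clog 2 n) (hpdvd : p ∣ n)
    (hprim : orderOf (2 : ZMod p) = p - 1) :
    dominationNumber (knodel n) ≤ n / p ∧ n / p < n / 4 := by
  haveI : Fact p.Prime := ⟨hp⟩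
  have hn0 : n ≠ 0 := NeZero.ne n
  have hp0 : 0 < p := hp.pos
  have hp5 : 5 ≤ p := by
    have h4 : p ≠ 4 := by rintro rfl; exact absurd hp (by decide)
    omega
  have hbig : 2 ^ (p - 1) < n := (Nat.lt_clog_iff_pow_lt one_lt_two).mp (by omega)
  have hlog : p - 1 ≤ Nat.log 2 n :=
    (Nat.le_log_iff_pow_le one_lt_two hn0).mpr hbig.le
  -- m = n / p
  set m := n / p with hm
  have hnm : n = p * m := (Nat.mul_div_cancel' hpdvd).symm
  have hmeven : Even m := by
    have hpodd : ¬ Even p := Nat.not_even_iff_odd.mpr (hp.odd_of_ne_two (by omega))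
    rw [hnm] at hne
    rcases Nat.even_mul.mp hne with h | h
    · exact absurd h hpodd
    · exact h
  have hm0 : m ≠ 0 := by rintro h; rw [h, mul_zero] at hnm; omega
  -- Second part: n / p < n / 4
  have part2 : m < n / 4 := by
    rcases hmeven with ⟨s, hs⟩
    by_cases hP : p = 5
    · subst hP
      have h16 : (16 : ℕ) < n := by norm_num at hbig; omega
      omega
    · have hp7 : 7 ≤ p := by
        have h6 : p ≠ 6 := by rintro rfl; exact absurd hp (by decide)
        omega
      have h7m : 7 * m ≤ n := by
        calc 7 * m ≤ p * m := Nat.mul_le_mul_right m hp7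
        _ = n := hnm.symm
      omega
  refine ⟨?_, part2⟩
  -- Construct the dominating set
  have h2p : (2 : ZMod p) ≠ 0 := by
    have : ¬ (p ∣ 2) := by intro h; have := Nat.le_of_dvd (by norm_num) h; omega
    simpa [show ((2:ℕ) : ZMod p) = (2 : ZMod p) by push_cast; ring,
      ZMod.natCast_eq_zero_iff] using
      fun h => this ((ZMod.natCast_eq_zero_iff 2 p).mp (by exact_mod_cast h))
  set c : ZMod p := -(2⁻¹ : ZMod p) with hc
  have hinv : (2 : ZMod p) * 2⁻¹ = 1 := mul_inv_cancel₀ h2p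
  set f := ZMod.castHom hpdvd (ZMod p) with hf
  classical
  set D : Finset (ZMod n) := Finset.univ.filter (fun x => f x = c) with hD
  -- cardinality of D
  set g : ℕ → ZMod n := fun k => ((c.val + p * k : ℕ) : ZMod n) with hg
  have hDimg : D = (Finset.range m).image g := by
    ext x
    simp only [hD, Finset.mem_filter, Finset.mem_univ, true_and, Finset.mem_image,
      Finset.mem_range]
    constructor
    · intro hx
      have hxv : (x.val : ZMod p) = c := by
        rw [ZMod.natCast_val, ← ZMod.castHom_apply (h := hpdvd)]; exact hx
      have hcv : (c.val : ZMod p) = c := by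
        rw [ZMod.natCast_val, ZMod.cast_id]
      have hmod : x.val % p = c.val % p :=
        (ZMod.natCast_eq_natCast_iff' _ _ _).mp (by rw [hxv, hcv])
      have hclt : c.val < p := c.val_lt
      have hxmod : x.val % p = c.val := by rw [hmod, Nat.mod_eq_of_lt hclt]
      refine ⟨x.val / p, ?_, ?_⟩
      · exact Nat.div_lt_div_of_lt_of_dvd hpdvd x.val_lt
      · have : c.val + p * (x.val / p) = x.val := by
          have := Nat.div_add_mod x.val p; omega
        rw [hg]; simp only [this]
        rw [ZMod.natCast_val, ZMod.cast_id]
    · rintro ⟨k, hk, rfl⟩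
      rw [hg, hf]
      simp only [map_natCast]
      push_cast [ZMod.natCast_self, ZMod.cast_id]
      rw [ZMod.natCast_val, ZMod.cast_id]; ring
  have hbound : ∀ k < m, c.val + p * k < n := by
    intro k hk
    have h1 : p * (k + 1) ≤ p * m := Nat.mul_le_mul_left p (by omega)
    have := c.val_lt
    rw [← hnm] at h1
    nlinarith [c.val_lt]
  have hcard : D.card = m := by
    rw [hDimg, Finset.card_image_of_injOn, Finset.card_range]
    intro a ha b hb hab
    simp only [Finset.coe_range, Set.mem_Iio] at ha hb
    have ha' := hbound a ha
    have hb' := hbound b hb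
    have : (c.val + p * a) % n = (c.val + p * b) % n :=
      (ZMod.natCast_eq_natCast_iff' _ _ _).mp hab
    rw [Nat.mod_eq_of_lt ha', Nat.mod_eq_of_lt hb'] at this
    have h' : p * a = p * b := by omega
    exact Nat.eq_of_mul_eq_mul_left hp0 h' 
  -- domination property
  have hdom : ∀ v, v ∉ D → ∃ u ∈ D, (knodel n).Adj u v := by
    intro v hv
    have hv' : f v ≠ c := by
      simpa [hD] using hv
    set w : ZMod p := c + 1 + f v with hw
    have hw0 : w ≠ 0 := by
      intro h
      apply hv'
      rw [hw] at h
      rw [hc]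
      linear_combination h + hinv
    have hwu : IsUnit w := isUnit_iff_ne_zero.mpr hw0
    have h2u : IsUnit (2 : ZMod p) := isUnit_iff_ne_zero.mpr h2p
    have hord : orderOf h2u.unit = Fintype.card (ZMod p)ˣ := by
      rw [ZMod.card_units]
      rw [← orderOf_units, IsUnit.unit_spec]; exact hprim
    obtain ⟨k, hk, hgk⟩ := pow_surj_of_orderOf_eq_card h2u.unit hord hwu.unit
    rw [ZMod.card_units] at hk
    set t : ℕ := if k = 0 then p - 1 else k with ht
    have ht1 : 1 ≤ t := by rw [ht]; split <;> omega
    have htp : t ≤ p - 1 := by rw [ht]; split <;> omega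
    have htlog : t ≤ Nat.log 2 n := le_trans htp hlog
    have h2tw : (2 : ZMod p) ^ t = w := by
      have hpow : h2u.unit ^ t = hwu.unit := by
        rw [ht]; split
        · rename_i h0
          rw [← hgk, h0, pow_zero]
          have : orderOf h2u.unit = p - 1 := by rw [hord, ZMod.card_units]
          rw [← this, pow_orderOf_eq_one]
        · exact hgk
      calc (2 : ZMod p) ^ t = (h2u.unit : ZMod p) ^ t := by rw [IsUnit.unit_spec]
        _ = ((h2u.unit ^ t : (ZMod p)ˣ) : ZMod p) := by rw [Units.val_pow_eq_pow_val]
        _ = (hwu.unit : ZMod p) := by rw [hpow]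
        _ = w := IsUnit.unit_spec _
    set u : ZMod n := 2 ^ t - 1 - v with hu
    have hfu : f u = c := by
      rw [hu]
      have : f (2 ^ t - 1 - v) = 2 ^ t - 1 - f v := by
        rw [map_sub, map_sub, map_pow, map_one, map_ofNat]
      rw [this, h2tw, hw]; ring
    have huD : u ∈ D := by simp [hD, hfu]
    refine ⟨u, huD, ?_, t, ht1, htlog, ?_⟩
    · intro h
      apply hv'
      rw [← h, hfu]
    · rw [hu]; ring
  exact Nat.sInf_le ⟨D, hdom, hcard⟩
end

section
/- Let G be a k-regular bipartite graph on n vertices with k ≥ 2 and suppose (k + 1) divides n. If γ(G) = n/(k + 1), then n/(k + 1) is even; moreover, for every minimum dominating set D and any bipartition (X, Y) of G, |D ∩ X| = |D ∩ Y|. -/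
open Finset

lemma split_card {V : Type*} [Fintype V] [DecidableEq V] (D X Y : Finset V)
    (hdisj : Disjoint X Y) (hunion : X ∪ Y = Finset.univ) :
    (D ∩ X).card + (D ∩ Y).card = D.card := by
  rw [← Finset.card_union_of_disjoint (hdisj.mono inter_subset_right inter_subset_right),
    ← Finset.inter_union_distrib_left, hunion, Finset.inter_univ]

lemma aux_main {V : Type*} [Fintype V] [DecidableEq V] (G : SimpleGraph V) [DecidableRel G.Adj]
    (k : ℕ) (hk : 2 ≤ k) (hreg : G.IsRegularOfDegree k)
    (D X Y : Finset V) (hdisj : Disjoint X Y) (hunion : X ∪ Y = Finset.univ)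
    (hbi : ∀ u v, G.Adj u v → (u ∈ X ↔ v ∈ Y))
    (hdom : ∀ v, v ∉ D → ∃ u ∈ D, G.Adj u v)
    (hcard : Fintype.card V = (k + 1) * D.card) :
    (D ∩ X).card = (D ∩ Y).card := by
  have hdeg : ∀ v, (G.neighborFinset v).card = k := fun v => by
    rw [SimpleGraph.card_neighborFinset_eq_degree]; exact hreg v
  have hXnotY : ∀ v, v ∈ X ↔ v ∉ Y := by
    intro v
    constructor
    · intro hv hv'; exact Finset.disjoint_left.mp hdisj hv hv'
    · intro hv
      have := Finset.mem_univ v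
      rw [← hunion, Finset.mem_union] at this
      tauto
  have hYnotX : ∀ v, v ∈ Y ↔ v ∉ X := by
    intro v
    constructor
    · intro hv hv'; exact Finset.disjoint_left.mp hdisj hv' hv
    · intro hv
      have := Finset.mem_univ v
      rw [← hunion, Finset.mem_union] at this
      tauto
  have hNX : ∀ x ∈ X, G.neighborFinset x ⊆ Y := by
    intro x hx y hy
    exact (hbi x y ((SimpleGraph.mem_neighborFinset _ _ _).mp hy)).mp hx
  have hNY : ∀ y ∈ Y, G.neighborFinset y ⊆ X := by
    intro y hy x hx
    exact (hbi x y ((SimpleGraph.mem_neighborFinset _ _ _).mp hx).symm).mpr hy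
  -- |X| = |Y|
  have hXeqY : X.card = Y.card := by
    have h1 : ∀ x ∈ X, (Y.filter (fun y => G.Adj x y)) = G.neighborFinset x := by
      intro x hx; ext y
      simp only [mem_filter, SimpleGraph.mem_neighborFinset]
      exact ⟨fun h => h.2, fun h => ⟨(hbi x y h).mp hx, h⟩⟩
    have h2 : ∀ y ∈ Y, (X.filter (fun x => G.Adj x y)) = G.neighborFinset y := by
      intro y hy; ext x
      simp only [mem_filter, SimpleGraph.mem_neighborFinset]
      exact ⟨fun h => h.2.symm, fun h => ⟨(hbi x y h.symm).mpr hy, h.symm⟩⟩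
    have hs : ∑ x ∈ X, ∑ y ∈ Y, (if G.Adj x y then (1:ℕ) else 0)
        = ∑ y ∈ Y, ∑ x ∈ X, (if G.Adj x y then (1:ℕ) else 0) := Finset.sum_comm
    have hL : ∑ x ∈ X, ∑ y ∈ Y, (if G.Adj x y then (1:ℕ) else 0) = X.card * k := by
      rw [Finset.sum_congr rfl (fun x hx => by
        rw [← Finset.card_filter, h1 x hx, hdeg x])]
      simp [Finset.sum_const, smul_eq_mul]
    have hR : ∑ y ∈ Y, ∑ x ∈ X, (if G.Adj x y then (1:ℕ) else 0) = Y.card * k := by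
      rw [Finset.sum_congr rfl (fun y hy => by
        rw [← Finset.card_filter, h2 y hy, hdeg y])]
      simp [Finset.sum_const, smul_eq_mul]
    have := hL ▸ hR ▸ hs
    exact Nat.eq_of_mul_eq_mul_right (by omega) this
  -- key covering bound
  have key : ∀ A B : Finset V, (∀ v, v ∈ A ↔ v ∉ B) →
      (∀ a ∈ A, G.neighborFinset a ⊆ B) → (∀ b ∈ B, G.neighborFinset b ⊆ A) →
      A.card ≤ (D ∩ A).card + k * (D ∩ B).card := by
    intro A B hAB hNA hNB
    have hBA : ∀ v, v ∈ B ↔ v ∉ A := by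
      intro v
      constructor
      · intro hv hv'; exact (hAB v).mp hv' hv
      · intro hv; by_contra h; exact hv ((hAB v).mpr h)
    have hsub : A ⊆ D.biUnion (fun u => (insert u (G.neighborFinset u)) ∩ A) := by
      intro v hv
      rcases em (v ∈ D) with hvD | hvD
      · exact mem_biUnion.mpr ⟨v, hvD, mem_inter.mpr ⟨mem_insert_self _ _, hv⟩⟩
      · obtain ⟨u, huD, hadj⟩ := hdom v hvD
        exact mem_biUnion.mpr ⟨u, huD, mem_inter.mpr
          ⟨mem_insert_of_mem ((SimpleGraph.mem_neighborFinset _ _ _).mpr hadj), hv⟩⟩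
    have h1 : A.card ≤ ∑ u ∈ D, ((insert u (G.neighborFinset u)) ∩ A).card :=
      le_trans (Finset.card_le_card hsub) (Finset.card_biUnion_le)
    have h2 : ∀ u ∈ D, ((insert u (G.neighborFinset u)) ∩ A).card
        = if u ∈ A then 1 else k := by
      intro u _
      by_cases hu : u ∈ A
      · rw [if_pos hu]
        have heq : (insert u (G.neighborFinset u)) ∩ A = {u} := by
          ext v
          simp only [mem_inter, mem_insert, mem_singleton]
          constructor
          · rintro ⟨hv1 | hv2, hvA⟩
            · exact hv1
            · exact absurd ((hBA v).mp (hNA u hu hv2)) (fun h => h hvA)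
          · rintro rfl; exact ⟨Or.inl rfl, hu⟩
        rw [heq, card_singleton]
      · rw [if_neg hu]
        have hu' : u ∈ B := (hBA u).mpr hu
        have heq : (insert u (G.neighborFinset u)) ∩ A = G.neighborFinset u := by
          ext v
          simp only [mem_inter, mem_insert]
          constructor
          · rintro ⟨hv1 | hv2, hvA⟩
            · exact absurd (hv1 ▸ hvA) hu
            · exact hv2
          · intro hv; exact ⟨Or.inr hv, hNB u hu' hv⟩
        rw [heq, hdeg u]
    rw [Finset.sum_congr rfl h2] at h1
    rw [Finset.sum_ite, Finset.sum_const, Finset.sum_const, smul_eq_mul, smul_eq_mul] at h1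
    have hfA : D.filter (fun u => u ∈ A) = D ∩ A := by
      ext v; simp [mem_filter, mem_inter]
    have hfB : D.filter (fun u => ¬ u ∈ A) = D ∩ B := by
      ext v; simp only [mem_filter, mem_inter]
      constructor
      · rintro ⟨h, h'⟩; exact ⟨h, (hBA v).mpr h'⟩
      · rintro ⟨h, h'⟩; exact ⟨h, (hAB v).not.mpr (not_not.mpr h')⟩
    rw [hfA, hfB] at h1
    calc A.card ≤ (D ∩ A).card * 1 + (D ∩ B).card * k := h1
      _ = (D ∩ A).card + k * (D ∩ B).card := by ring
  have hX := key X Y hXnotY hNX hNY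
  have hY := key Y X hYnotX hNY hNX
  have hVsplit : X.card + Y.card = Fintype.card V := by
    rw [← Finset.card_union_of_disjoint hdisj, hunion, Finset.card_univ]
  have hDsplit : (D ∩ X).card + (D ∩ Y).card = D.card := split_card D X Y hdisj hunion
  have hsum : X.card + Y.card = (k + 1) * ((D ∩ X).card + (D ∩ Y).card) := by
    rw [hVsplit, hcard, hDsplit]
  have hexp : (k + 1) * ((D ∩ X).card + (D ∩ Y).card)
      = ((D ∩ X).card + k * (D ∩ Y).card) + ((D ∩ Y).card + k * (D ∩ X).card) := by ring
  have e : (D ∩ X).card + k * (D ∩ Y).card = (D ∩ Y).card + k * (D ∩ X).card := by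
    linarith
  have trick : ∀ a b : ℕ, a + k * b = b + k * a → a ≤ b → a = b := by
    intro a b he hab
    obtain ⟨d, rfl⟩ := Nat.exists_eq_add_of_le hab
    rw [mul_add] at he
    have h2 : k * d = d := by linarith
    have h3 : 2 * d ≤ k * d := Nat.mul_le_mul_right d hk
    rw [h2] at h3
    omega
  rcases le_total (D ∩ X).card (D ∩ Y).card with h | h
  · exact trick _ _ e h
  · exact (trick _ _ e.symm h).symm
theorem stmt_5 {V : Type*} [Fintype V] [DecidableEq V] (G : SimpleGraph V) [DecidableRel G.Adj] (k : ℕ)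
    (hk : 2 ≤ k) (hreg : G.IsRegularOfDegree k)
    (hbip : ∃ X Y : Finset V, Disjoint X Y ∧ X ∪ Y = Finset.univ ∧
      ∀ u v, G.Adj u v → (u ∈ X ↔ v ∈ Y))
    (hdvd : (k + 1) ∣ Fintype.card V)
    (hgam : dominationNumber G = Fintype.card V / (k + 1)) :
    Even (Fintype.card V / (k + 1)) ∧
    ∀ D : Finset V, (∀ v, v ∉ D → ∃ u ∈ D, G.Adj u v) →
      D.card = dominationNumber G →
      ∀ X Y : Finset V, Disjoint X Y → X ∪ Y = Finset.univ →
        (∀ u v, G.Adj u v → (u ∈ X ↔ v ∈ Y)) →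
        (D ∩ X).card = (D ∩ Y).card := by
  have hn : Fintype.card V = (k + 1) * (Fintype.card V / (k + 1)) :=
    (Nat.mul_div_cancel' hdvd).symm
  constructor
  · -- Even part: use a minimum dominating set, which exists
    have hne : {m | ∃ D : Finset V, (∀ v, v ∉ D → ∃ u ∈ D, G.Adj u v) ∧ D.card = m}.Nonempty :=
      ⟨Finset.univ.card, Finset.univ, fun v hv => absurd (Finset.mem_univ v) hv, rfl⟩
    have hmem : dominationNumber G ∈
        {m | ∃ D : Finset V, (∀ v, v ∉ D → ∃ u ∈ D, G.Adj u v) ∧ D.card = m} :=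
      Nat.sInf_mem hne
    obtain ⟨D, hdomD, hcardD⟩ := hmem
    obtain ⟨X, Y, hdisj, hunion, hbi⟩ := hbip
    have hcardV : Fintype.card V = (k + 1) * D.card := by
      rw [hcardD, hgam]; exact hn
    have heq := aux_main G k hk hreg D X Y hdisj hunion hbi hdomD hcardV
    have hsplit := split_card D X Y hdisj hunion
    exact ⟨(D ∩ X).card, by omega⟩
  · intro D hdomD hcardD X Y hdisj hunion hbi
    have hcardV : Fintype.card V = (k + 1) * D.card := by
      rw [hcardD, hgam]; exact hn
    exact aux_main G k hk hreg D X Y hdisj hunion hbi hdomD hcardV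
end

section
/- Let G be a k-regular bipartite graph on n vertices with k ≥ 2, and suppose n = 2j(k + 1) + r for integers j ≥ 0 and 4 ≤ r < k + 1. Then γ(G) > 2j + 1 = ⌈n/(k + 1)⌉. -/
open Finset

section aux

variable {V : Type*} [Fintype V] [DecidableEq V] (G : SimpleGraph V) [DecidableRel G.Adj]

lemma key_cover (k : ℕ) (hreg : G.IsRegularOfDegree k)
    (X Y : Finset V)
    (hXY : ∀ u v, G.Adj u v → (u ∈ X ↔ v ∈ Y))
    (D : Finset V) (hdom : ∀ v, v ∉ D → ∃ u ∈ D, G.Adj u v) :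
    Y.card ≤ (D ∩ Y).card + k * (D ∩ X).card := by
  have hsub : Y ⊆ (D ∩ Y) ∪ (D ∩ X).biUnion (fun u => G.neighborFinset u) := by
    intro y hy
    by_cases hyD : y ∈ D
    · exact mem_union_left _ (mem_inter.2 ⟨hyD, hy⟩)
    · obtain ⟨u, huD, hadj⟩ := hdom y hyD
      have huX : u ∈ X := (hXY u y hadj).mpr hy
      exact mem_union_right _ (mem_biUnion.2 ⟨u, mem_inter.2 ⟨huD, huX⟩,
        (SimpleGraph.mem_neighborFinset G u y).2 hadj⟩)
  calc Y.card ≤ ((D ∩ Y) ∪ (D ∩ X).biUnion (fun u => G.neighborFinset u)).card :=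
        card_le_card hsub
    _ ≤ (D ∩ Y).card + ((D ∩ X).biUnion (fun u => G.neighborFinset u)).card := card_union_le _ _
    _ ≤ (D ∩ Y).card + ∑ u ∈ D ∩ X, (G.neighborFinset u).card :=
        Nat.add_le_add_left (card_biUnion_le) _
    _ = (D ∩ Y).card + k * (D ∩ X).card := by
        congr 1
        have hd : ∀ u ∈ D ∩ X, (G.neighborFinset u).card = k := fun u _ => hreg u
        rw [Finset.sum_congr rfl hd, Finset.sum_const, smul_eq_mul, mul_comm]

lemma sides_eq (k : ℕ) (hk : 0 < k) (hreg : G.IsRegularOfDegree k)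
    (X Y : Finset V)
    (hXY : ∀ u v, G.Adj u v → (u ∈ X ↔ v ∈ Y)) :
    X.card = Y.card := by
  have hNX : ∀ x ∈ X, G.neighborFinset x = Y.filter (fun y => G.Adj x y) := by
    intro x hx
    ext y
    simp only [SimpleGraph.mem_neighborFinset, mem_filter]
    exact ⟨fun h => ⟨(hXY x y h).1 hx, h⟩, fun h => h.2⟩
  have hNY : ∀ y ∈ Y, G.neighborFinset y = X.filter (fun x => G.Adj x y) := by
    intro y hy
    ext x
    simp only [SimpleGraph.mem_neighborFinset, mem_filter]
    exact ⟨fun h => ⟨(hXY x y h.symm).2 hy, h.symm⟩, fun h => h.2.symm⟩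
  have hmul : k * X.card = k * Y.card := by
    calc k * X.card = ∑ _x ∈ X, k := by rw [Finset.sum_const, smul_eq_mul, mul_comm]
      _ = ∑ x ∈ X, ∑ y ∈ Y, (if G.Adj x y then 1 else 0) := by
          refine Finset.sum_congr rfl (fun x hx => ?_)
          rw [← Finset.card_filter, ← hNX x hx]
          exact (hreg x).symm
      _ = ∑ y ∈ Y, ∑ x ∈ X, (if G.Adj x y then 1 else 0) := Finset.sum_comm
      _ = ∑ _y ∈ Y, k := by
          refine Finset.sum_congr rfl (fun y hy => ?_)
          rw [← Finset.card_filter, ← hNY y hy]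
          exact hreg y
      _ = k * Y.card := by rw [Finset.sum_const, smul_eq_mul, mul_comm]
  exact Nat.eq_of_mul_eq_mul_left hk hmul

end aux

theorem stmt_6 {V : Type*} [Fintype V] [DecidableEq V] (G : SimpleGraph V) [DecidableRel G.Adj] (k j r : ℕ)
    (hk : 2 ≤ k) (hreg : G.IsRegularOfDegree k)
    (hbip : ∃ X Y : Finset V, Disjoint X Y ∧ X ∪ Y = Finset.univ ∧
      ∀ u v, G.Adj u v → (u ∈ X ↔ v ∈ Y))
    (hn : Fintype.card V = 2 * j * (k + 1) + r) (hr4 : 4 ≤ r) (hrk : r < k + 1) :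
    2 * j + 1 < dominationNumber G ∧
    2 * j + 1 = (Fintype.card V + k) / (k + 1) := by
  obtain ⟨X, Y, hdisj, hunion, hXY⟩ := hbip
  have hYX : ∀ u v, G.Adj u v → (u ∈ Y ↔ v ∈ X) := by
    intro u v h
    exact ⟨fun hu => (hXY v u h.symm).mpr hu, fun hv => (hXY v u h.symm).mp hv⟩
  have hXeqY : X.card = Y.card := sides_eq G k (by omega) hreg X Y hXY
  have hsum : X.card + Y.card = Fintype.card V := by
    rw [← Finset.card_union_of_disjoint hdisj, hunion, Finset.card_univ]
  have h2Y : 2 * Y.card = Fintype.card V := by omega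
  have h2X : 2 * X.card = Fintype.card V := by omega
  constructor
  · -- domination number part
    have hne : (Finset.univ : Finset V).card ∈
        {m | ∃ D : Finset V, (∀ v, v ∉ D → ∃ u ∈ D, G.Adj u v) ∧ D.card = m} :=
      ⟨Finset.univ, fun v hv => absurd (Finset.mem_univ v) hv, rfl⟩
    have hmem := Nat.sInf_mem ⟨_, hne⟩
    obtain ⟨D, hdom, hDcard⟩ := hmem
    rw [dominationNumber]
    by_contra hle
    push_neg at hle
    have hDle : D.card ≤ 2 * j + 1 := by rw [hDcard]; exact hle
    have hab : (D ∩ X).card + (D ∩ Y).card = D.card := by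
      rw [← Finset.card_union_of_disjoint (hdisj.mono (Finset.inter_subset_right)
        (Finset.inter_subset_right)), ← Finset.inter_union_distrib_left, hunion,
        Finset.inter_univ]
    have hfin : ∀ (A B : Finset V), (∀ u v, G.Adj u v → (u ∈ A ↔ v ∈ B)) →
        (D ∩ A).card ≤ j → (D ∩ A).card + (D ∩ B).card = D.card →
        2 * j * (k + 1) + 4 ≤ 2 * B.card → False := by
      intro A B hAB ha habs hB
      have hcov := key_cover G k hreg A B hAB D hdom
      set a := (D ∩ A).card
      set b := (D ∩ B).card
      have h1 : k * a ≤ k * j := Nat.mul_le_mul_left k ha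
      have h2 : a + k * a ≤ j + k * j := by omega
      nlinarith [hcov, hDle, habs, hB, h2]
    rcases (by omega : (D ∩ X).card ≤ j ∨ (D ∩ Y).card ≤ j) with hc | hc
    · exact hfin X Y hXY hc hab (by omega)
    · exact hfin Y X hYX hc (by omega) (by omega)
  · -- arithmetic part
    rw [hn]
    have h1 : (2 * j * (k + 1) + r + k) = (r + k) + (k + 1) * (2 * j) := by ring
    rw [h1, Nat.add_mul_div_left _ _ (by omega : 0 < k + 1)]
    have h2 : (r + k) / (k + 1) = 1 :=
      Nat.div_eq_of_lt_le (by omega) (by omega)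
    omega
end

section
/- Let n be even, let k = ⌊log₂ n⌋, and suppose n = 2j(k + 1) + r with 4 ≤ r < k + 1. Then γ(KG_n) > 2j + 1 = ⌈n/(⌊log₂ n⌋ + 1)⌉. -/
set_option maxHeartbeats 1000000

lemma aux_val_add_mod_two (n : ℕ) [NeZero n] (hne : Even n) (x y : ZMod n) :
    (x + y).val % 2 = (x.val + y.val) % 2 := by
  rw [ZMod.val_add, Nat.mod_mod_of_dvd _ hne.two_dvd]

lemma aux_half_card (n : ℕ) [NeZero n] (hne : Even n) (h1 : 1 < n) (p : ℕ) (hp : p < 2) :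
    (Finset.univ.filter (fun v : ZMod n => v.val % 2 = p)).card = n / 2 := by
  haveI : Fact (1 < n) := ⟨h1⟩
  have key : ∀ q < 2, (Finset.univ.filter (fun v : ZMod n => v.val % 2 = q)).card ≤
      (Finset.univ.filter (fun v : ZMod n => v.val % 2 = 1 - q)).card := by
    intro q hq
    apply Finset.card_le_card_of_injOn (fun v => v + 1)
    · intro v hv
      simp only [Finset.mem_coe, Finset.mem_filter, Finset.mem_univ, true_and] at hv ⊢
      rw [aux_val_add_mod_two n hne, ZMod.val_one]
      omega
    · intro a _ b _ h
      exact add_right_cancel h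
  have hsum : (Finset.univ.filter (fun v : ZMod n => v.val % 2 = 0)).card +
      (Finset.univ.filter (fun v : ZMod n => v.val % 2 = 1)).card = n := by
    have := Finset.card_filter_add_card_filter_not
      (s := (Finset.univ : Finset (ZMod n))) (p := fun v => v.val % 2 = 0)
    have e : (Finset.univ.filter (fun v : ZMod n => ¬ v.val % 2 = 0)) =
        (Finset.univ.filter (fun v : ZMod n => v.val % 2 = 1)) := by
      apply Finset.filter_congr; intro v _; omega
    rw [e, Finset.card_univ, ZMod.card] at this
    exact this
  have h0 := key 0 (by omega)
  have h1' := key 1 (by omega)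
  simp only [Nat.sub_zero, Nat.sub_self] at h0 h1'
  interval_cases p
  · omega
  · omega

lemma aux_count (n : ℕ) [NeZero n] (hne : Even n) (h6 : 6 ≤ n) (D : Finset (ZMod n))
    (hD : ∀ v ∉ D, ∃ u ∈ D, (knodel n).Adj u v) (p : ℕ) (hp : p < 2) :
    n / 2 ≤ (D.filter (fun v => v.val % 2 = p)).card +
      (D.filter (fun v => ¬ v.val % 2 = p)).card * Nat.log 2 n := by
  set k := Nat.log 2 n with hk
  have hk1 : 1 ≤ k := Nat.log_pos (by norm_num) (by omega)
  have hpow : ∀ t, t ≤ k → 2 ^ t ≤ n := by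
    intro t ht
    calc 2 ^ t ≤ 2 ^ k := Nat.pow_le_pow_right (by norm_num) ht
    _ ≤ n := Nat.pow_log_le_self 2 (by omega)
  have hcval : ∀ t, 1 ≤ t → t ≤ k → ((2 : ZMod n) ^ t - 1).val = 2 ^ t - 1 := by
    intro t h1 h2
    have hle : 1 ≤ 2 ^ t := Nat.one_le_two_pow
    have : ((2 : ZMod n) ^ t - 1) = ((2 ^ t - 1 : ℕ) : ZMod n) := by
      push_cast [Nat.cast_sub hle]
      ring
    rw [this, ZMod.val_cast_of_lt]
    have := hpow t h2
    omega
  set S := ((D.filter (fun v => ¬ v.val % 2 = p)) ×ˢ Finset.Icc 1 k).image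
    (fun q : ZMod n × ℕ => (2 : ZMod n) ^ q.2 - 1 - q.1) with hS
  have hsub : Finset.univ.filter (fun v : ZMod n => v.val % 2 = p) ⊆
      (D.filter (fun v => v.val % 2 = p)) ∪ S := by
    intro v hv
    simp only [Finset.mem_filter, Finset.mem_univ, true_and] at hv
    by_cases hvD : v ∈ D
    · exact Finset.mem_union_left _ (Finset.mem_filter.mpr ⟨hvD, hv⟩)
    · obtain ⟨u, huD, hneq, t, ht1, htk, heq⟩ := hD v hvD
      apply Finset.mem_union_right
      rw [hS]
      apply Finset.mem_image.mpr
      refine ⟨(u, t), ?_, ?_⟩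
      · rw [Finset.mem_product]
        refine ⟨Finset.mem_filter.mpr ⟨huD, ?_⟩, Finset.mem_Icc.mpr ⟨ht1, htk⟩⟩
        -- u has opposite parity
        have h1 := aux_val_add_mod_two n hne u v
        rw [heq, hcval t ht1 htk] at h1
        have h2 : 2 ∣ 2 ^ t := dvd_pow_self 2 (by omega)
        have h3 : 1 ≤ 2 ^ t := Nat.one_le_two_pow
        have hodd : (2 ^ t - 1) % 2 = 1 := by omega
        rw [hodd] at h1
        show ¬ u.val % 2 = p
        omega
      · simp only
        rw [← heq]; ring
  have hcard := Finset.card_le_card hsub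
  rw [aux_half_card n hne (by omega) p hp] at hcard
  calc n / 2 ≤ ((D.filter (fun v => v.val % 2 = p)) ∪ S).card := hcard
    _ ≤ (D.filter (fun v => v.val % 2 = p)).card + S.card := Finset.card_union_le _ _
    _ ≤ (D.filter (fun v => v.val % 2 = p)).card +
        (D.filter (fun v => ¬ v.val % 2 = p)).card * k := by
      gcongr
      calc S.card ≤ ((D.filter (fun v => ¬ v.val % 2 = p)) ×ˢ Finset.Icc 1 k).card :=
            Finset.card_image_le
        _ = (D.filter (fun v => ¬ v.val % 2 = p)).card * (Finset.Icc 1 k).card :=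
            Finset.card_product _ _
        _ = (D.filter (fun v => ¬ v.val % 2 = p)).card * k := by
            rw [Nat.card_Icc, Nat.add_sub_cancel]

theorem stmt_10 (n j r : ℕ) [NeZero n] (hn6 : 6 ≤ n) (hne : Even n)
    (hn : n = 2 * j * (Nat.log 2 n + 1) + r) (hr4 : 4 ≤ r) (hrk : r < Nat.log 2 n + 1) :
    2 * j + 1 < dominationNumber (knodel n) ∧
    2 * j + 1 = (n + Nat.log 2 n) / (Nat.log 2 n + 1) := by
  set k := Nat.log 2 n with hk
  have hk4 : 4 ≤ k := by omega
  -- arithmetic facts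
  have hprod : 2 * j * (k + 1) = 2 * (j * (k + 1)) := by ring
  have hnmod : n % 2 = 0 := Nat.even_iff.mp hne
  have hrmod : r % 2 = 0 := by omega
  have hN : n / 2 = j * (k + 1) + r / 2 := by omega
  constructor
  · -- domination number bound
    have hbound : ∀ D : Finset (ZMod n),
        (∀ v, v ∉ D → ∃ u ∈ D, (knodel n).Adj u v) → 2 * j + 1 < D.card := by
      intro D hD
      have h0 := aux_count n hne hn6 D hD 0 (by omega)
      have h1 := aux_count n hne hn6 D hD 1 (by omega)
      have e1 : (D.filter (fun v => v.val % 2 = 1)) = (D.filter (fun v => ¬ v.val % 2 = 0)) := by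
        apply Finset.filter_congr; intro v _; omega
      have e2 : (D.filter (fun v => ¬ v.val % 2 = 1)) = (D.filter (fun v => v.val % 2 = 0)) := by
        apply Finset.filter_congr; intro v _; omega
      rw [e1, e2, ← hk] at h1
      rw [← hk] at h0
      have hcard := Finset.card_filter_add_card_filter_not
        (s := D) (p := fun v : ZMod n => v.val % 2 = 0)
      set a := (D.filter (fun v => v.val % 2 = 0)).card with ha
      set b := (D.filter (fun v => ¬ v.val % 2 = 0)).card with hb
      rw [hN] at h0 h1
      by_contra hcon
      push_neg at hcon
      have hab : a + b ≤ 2 * j + 1 := by omega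
      have hm : 2 ≤ r / 2 := by omega
      have hbj : j + 1 ≤ b := by
        by_contra hbj'
        push_neg at hbj'
        have hb' : b ≤ j := by omega
        zify at h0 hab hb' hm hk4 ⊢
        nlinarith [mul_nonneg (by linarith : (0:ℤ) ≤ (j:ℤ) - b) (by linarith : (0:ℤ) ≤ (k:ℤ) - 1)]
      have haj : j + 1 ≤ a := by
        by_contra haj'
        push_neg at haj'
        have ha' : a ≤ j := by omega
        zify at h1 hab ha' hm hk4 ⊢
        nlinarith [mul_nonneg (by linarith : (0:ℤ) ≤ (j:ℤ) - a) (by linarith : (0:ℤ) ≤ (k:ℤ) - 1)]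
      omega
    have hnonempty : {m | ∃ D : Finset (ZMod n),
        (∀ v, v ∉ D → ∃ u ∈ D, (knodel n).Adj u v) ∧ D.card = m}.Nonempty := by
      exact ⟨(Finset.univ : Finset (ZMod n)).card, Finset.univ,
        fun v hv => absurd (Finset.mem_univ v) hv, rfl⟩
    have hmem : dominationNumber (knodel n) ∈ {m | ∃ D : Finset (ZMod n),
        (∀ v, v ∉ D → ∃ u ∈ D, (knodel n).Adj u v) ∧ D.card = m} := Nat.sInf_mem hnonempty
    obtain ⟨D, hD, hDcard⟩ := hmem
    rw [← hDcard]
    exact hbound D hD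
  · -- ceiling formula
    have e : (2 * j + 1) * (k + 1) = 2 * j * (k + 1) + (k + 1) := by ring
    have h : n + k = (r - 1) + (2 * j + 1) * (k + 1) := by omega
    rw [h, Nat.add_mul_div_right _ _ (by omega : 0 < k + 1),
      Nat.div_eq_of_lt (by omega : r - 1 < k + 1)]
    omega
end
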